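/- Let n ≥ 2, λ, R > 0, and let f(t) = √(2λ/(πR)) · t. Define w(x,t) = -(1/λ) log cos(λ(√(|x|² + 2(n-1)t) - R)) + λt + f(t) on the set of (x,t) with t ∈ [0, R²/(2(n-1))] and R - π/(2λ) < √(|x|² + 2(n-1)t) < R + π/(2λ), x ≠ 0. Then w satisfies the supersolution inequality -∂_t w + (δ^{ij} - w^i w^j/(1 + |∇w|²)) w_{ij} ≤ 0. -/

import Mathlib

open Real

/- ### Auxiliary scalar calculus lemmas -/

lemma hasDerivAt_phi_aux (lam R : ℝ) (hlam : lam ≠ 0) (r : ℝ) (hr : 0 < r)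
    (hcos : Real.cos (lam*(Real.sqrt r - R)) ≠ 0) :
    HasDerivAt (fun u => -(1/lam) * Real.log (Real.cos (lam*(Real.sqrt u - R))))
      (Real.tan (lam*(Real.sqrt r - R)) / (2*Real.sqrt r)) r := by
  have hsr : Real.sqrt r ≠ 0 := (Real.sqrt_pos.mpr hr).ne'
  have h2 : HasDerivAt (fun u => lam*(Real.sqrt u - R)) (lam * (1/(2*Real.sqrt r))) r :=
    ((Real.hasDerivAt_sqrt hr.ne').sub_const R).const_mul lam
  have h3 := h2.cos
  have h4 := (h3.log hcos).const_mul (-(1/lam))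
  refine h4.congr_deriv ?_
  rw [Real.tan_eq_sin_div_cos]
  field_simp

lemma hasDerivAt_p_aux (lam R r : ℝ) (hr : 0 < r)
    (hcos : Real.cos (lam*(Real.sqrt r - R)) ≠ 0) :
    HasDerivAt (fun u => Real.tan (lam*(Real.sqrt u - R)) / Real.sqrt u)
      (lam*(1+Real.tan (lam*(Real.sqrt r - R))^2)/(2*r)
        - Real.tan (lam*(Real.sqrt r - R))/(2*r*Real.sqrt r)) r := by
  have hsrpos : 0 < Real.sqrt r := Real.sqrt_pos.mpr hr
  have hsr : Real.sqrt r ≠ 0 := hsrpos.ne'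
  have h2 : HasDerivAt (fun u => lam*(Real.sqrt u - R)) (lam * (1/(2*Real.sqrt r))) r :=
    ((Real.hasDerivAt_sqrt hr.ne').sub_const R).const_mul lam
  have htan : HasDerivAt (fun u => Real.tan (lam*(Real.sqrt u - R)))
      (1 / Real.cos (lam*(Real.sqrt r - R))^2 * (lam * (1/(2*Real.sqrt r)))) r :=
    by have := (Real.hasDerivAt_tan hcos).comp r h2; exact this
  have hdiv := htan.div (Real.hasDerivAt_sqrt hr.ne') hsr
  refine hdiv.congr_deriv ?_
  have hid : 1 / Real.cos (lam*(Real.sqrt r - R))^2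
      = 1 + Real.tan (lam*(Real.sqrt r - R))^2 := by
    have := Real.inv_one_add_tan_sq hcos
    field_simp at this ⊢
    linarith [this]
  rw [← hid]
  have hrr : Real.sqrt r * Real.sqrt r = r := Real.mul_self_sqrt hr.le
  field_simp
  ring_nf
  linear_combination (-(lam*√r - cos (lam*√r - lam*R)^2 * tan (lam*√r - lam*R))) * hrr

/- ### The key scalar inequality -/

set_option maxHeartbeats 4000000 in
lemma key_ineq_aux (lam R ρ b θ : ℝ) (hlam : 0 < lam) (hR : 0 < R) (hρ : 0 < ρ)
    (hb0 : 0 < b) (hbρ : b ≤ ρ^2) (hbR : ρ^2 - b ≤ R^2) (hθ : θ = lam*(ρ-R))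
    (hθ1 : -(π/2) < θ) (hθ2 : θ < π/2) :
    -lam - Real.sqrt (2*lam/(π*R)) + Real.tan θ/ρ
      + (lam*(1+Real.tan θ^2)/ρ^2 - Real.tan θ/ρ^3)*b
      - ((Real.tan θ/ρ)^2*(lam*(1+Real.tan θ^2)/ρ^2 - Real.tan θ/ρ^3)*b^2
           + (Real.tan θ/ρ)^3*b)
        /(1 + (Real.tan θ/ρ)^2*b) ≤ 0 := by
  have hπ := Real.pi_pos
  obtain ⟨T, hT⟩ : ∃ T, T = Real.tan θ := ⟨_, rfl⟩
  obtain ⟨c, hc⟩ : ∃ c, c = Real.sqrt (2*lam/(π*R)) := ⟨_, rfl⟩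
  rw [← hT, ← hc]
  have hcpos : 0 < c := by rw [hc]; exact Real.sqrt_pos.mpr (by positivity)
  have hc0 : 0 ≤ c := hcpos.le
  have hc2 : c^2 * (π*R) = 2*lam := by
    rw [hc, Real.sq_sqrt (by positivity)]
    field_simp
  have hD : 0 < ρ^2 + T^2*b := by positivity
  have hQ : 0 < 1 + (T/ρ)^2*b := by positivity
  have heq : -lam - c + T/ρ + (lam*(1+T^2)/ρ^2 - T/ρ^3)*b
      - ((T/ρ)^2*(lam*(1+T^2)/ρ^2 - T/ρ^3)*b^2 + (T/ρ)^3*b)/(1 + (T/ρ)^2*b)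
      = -c + ((ρ^2 - b)*(T/ρ - lam))/(ρ^2 + T^2*b) := by
    field_simp
    ring
  rw [heq]
  have hE : ((ρ^2 - b)*(T/ρ - lam))/(ρ^2 + T^2*b) ≤ c := by
    rcases le_or_gt T 0 with hT0 | hT0
    · have hnum : (ρ^2 - b)*(T/ρ - lam) ≤ 0 := by
        apply mul_nonpos_of_nonneg_of_nonpos
        · linarith
        · have : T/ρ ≤ 0 := div_nonpos_of_nonpos_of_nonneg hT0 hρ.le
          linarith
      calc ((ρ^2 - b)*(T/ρ - lam))/(ρ^2 + T^2*b) ≤ 0 :=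
            div_nonpos_of_nonpos_of_nonneg hnum hD.le
        _ ≤ c := hc0
    · -- T > 0, hence θ > 0 and ρ > R
      have hθ0 : 0 < θ := by
        by_contra h
        push_neg at h
        have hcos : 0 < Real.cos θ := Real.cos_pos_of_mem_Ioo ⟨hθ1, hθ2⟩
        have hsin : Real.sin θ ≤ 0 :=
          Real.sin_nonpos_of_nonpos_of_neg_pi_le h (by linarith)
        have : T ≤ 0 := by
          rw [hT, Real.tan_eq_sin_div_cos]
          exact div_nonpos_of_nonpos_of_nonneg hsin hcos.le
        linarith
      have hρR : R < ρ := by nlinarith [hθ0]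
      have hbθ : 2*R*θ/lam ≤ b := by
        have h1 : ρ^2 - R^2 = (θ/lam)*(ρ+R) := by
          rw [hθ]; field_simp; ring
        have h2 : (θ/lam)*(2*R) ≤ (θ/lam)*(ρ+R) := by
          apply mul_le_mul_of_nonneg_left (by linarith) (by positivity)
        have h3 : 2*R*θ/lam ≤ ρ^2 - R^2 := by
          rw [h1]
          calc 2*R*θ/lam = (θ/lam)*(2*R) := by ring
            _ ≤ _ := h2
        linarith
      have hstep1 : ((ρ^2 - b)*(T/ρ - lam))/(ρ^2 + T^2*b) ≤ (T*ρ)/(ρ^2 + T^2*b) := by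
        apply div_le_div_of_nonneg_right ?_ hD.le
        have e1 : (ρ^2 - b)*(T/ρ - lam) ≤ (ρ^2 - b)*(T/ρ) :=
          mul_le_mul_of_nonneg_left (by linarith) (by linarith)
        have e2 : (ρ^2 - b)*(T/ρ) ≤ ρ^2*(T/ρ) :=
          mul_le_mul_of_nonneg_right (by linarith) (by positivity)
        have e3 : ρ^2*(T/ρ) = T*ρ := by field_simp
        linarith
      have hcore : lam*(T*ρ) ≤ lam*c*ρ^2 + 2*c*R*T^2*θ := by
        rcases le_or_gt (π/16) θ with h16 | h16
        · have hc2T : c^2*π*R*T^2 = 2*lam*T^2 := by linear_combination T^2 * hc2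
          have hint1 : 0 ≤ c^2*R*T^2*(16*θ - π) :=
            mul_nonneg (mul_nonneg (mul_nonneg (sq_nonneg c) hR.le) (sq_nonneg T))
              (by linarith)
          have h1' : lam*T^2 ≤ 8*c^2*R*T^2*θ := by nlinarith [hint1, hc2T]
          have h2 : lam*T^2/(4*c) ≤ 2*c*R*T^2*θ := by
            rw [div_le_iff₀ (by positivity : (0:ℝ) < 4*c)]
            nlinarith [h1']
          have h3 : lam*(T*ρ) ≤ lam*c*ρ^2 + lam*T^2/(4*c) := by
            rw [← sub_nonneg]
            have heq3 : lam*c*ρ^2 + lam*T^2/(4*c) - lam*(T*ρ)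
                = (4*c*(lam*c*ρ^2) + lam*T^2 - 4*c*(lam*(T*ρ)))/(4*c) := by
              field_simp
            rw [heq3]
            apply div_nonneg ?_ (by positivity)
            nlinarith [mul_nonneg hlam.le (sq_nonneg (2*c*ρ - T))]
          linarith
        · -- small angle case
          have hcosθ : 0 < Real.cos θ := Real.cos_pos_of_mem_Ioo ⟨hθ1, hθ2⟩
          have hcoshalf : (1:ℝ)/2 ≤ Real.cos θ := by
            have := Real.cos_le_cos_of_nonneg_of_le_pi (x := θ) (y := π/3)
              hθ0.le (by linarith) (by linarith)
            rw [Real.cos_pi_div_three] at this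
            linarith
          have hsinle : Real.sin θ ≤ θ := Real.sin_le hθ0.le
          have htancos : T * Real.cos θ = Real.sin θ := by
            rw [hT, Real.tan_eq_sin_div_cos]
            field_simp
          have hT2θ : T ≤ 2*θ := by nlinarith
          have hTsmall : T ≤ 1/2 := by nlinarith [Real.pi_lt_d2]
          have h2cR : lam*T ≤ 2*c^2*R := by
            have hm := mul_le_mul_of_nonneg_left hTsmall (mul_pos hlam hπ).le
            nlinarith [hc2, Real.pi_lt_d2, hm, mul_pos hlam hπ]
          have hTcρ : T ≤ c*ρ := by
            have hρeq : ρ = R + θ/lam := by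
              rw [hθ]; field_simp; ring
            have h5 : 2*lam*T ≤ 2*lam*c*R + c*T := by
              nlinarith [sq_nonneg (2*lam*c*R - c*T),
                mul_nonneg (mul_nonneg hlam.le hT0.le) (by linarith : (0:ℝ) ≤ 2*c^2*R - lam*T),
                mul_pos (mul_pos hlam hcpos) hR, mul_pos hcpos hT0]
            have h6 : c*(R + θ/lam) ≥ c*R + c*(T/(2*lam)) := by
              have : T/(2*lam) ≤ θ/lam := by
                rw [div_le_div_iff₀ (by positivity) (by positivity)]
                nlinarith
              nlinarith [this, hcpos]
            have h7 : c*R + c*(T/(2*lam)) ≥ T := by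
              rw [ge_iff_le, ← sub_nonneg]
              have : c*R + c*(T/(2*lam)) - T = (2*lam*c*R + c*T - 2*lam*T)/(2*lam) := by
                field_simp
              rw [this]
              apply div_nonneg (by linarith) (by positivity)
            rw [hρeq]; linarith
          nlinarith [mul_le_mul_of_nonneg_left hTcρ (mul_pos hlam hρ).le,
            mul_nonneg (mul_nonneg (mul_nonneg hc0 hR.le) (sq_nonneg T)) hθ0.le]
      have hstep2 : (T*ρ)/(ρ^2 + T^2*b) ≤ c := by
        rw [div_le_iff₀ hD]
        have h8 : c*(ρ^2 + T^2*(2*R*θ/lam)) ≤ c*(ρ^2 + T^2*b) := by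
          apply mul_le_mul_of_nonneg_left ?_ hc0
          nlinarith [mul_nonneg (sq_nonneg T) (by linarith : (0:ℝ) ≤ b - 2*R*θ/lam)]
        have h9 : T*ρ ≤ c*(ρ^2 + T^2*(2*R*θ/lam)) := by
          rw [← sub_nonneg]
          have : c*(ρ^2 + T^2*(2*R*θ/lam)) - T*ρ
              = (lam*c*ρ^2 + 2*c*R*T^2*θ - lam*(T*ρ))/lam := by
            field_simp
          rw [this]
          apply div_nonneg (by linarith) hlam.le
        calc T*ρ ≤ c*(ρ^2 + T^2*(2*R*θ/lam)) := h9
          _ ≤ c*(ρ^2 + T^2*b) := h8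
          _ = c*(ρ^2 + T^2*b) := rfl
      calc ((ρ^2 - b)*(T/ρ - lam))/(ρ^2 + T^2*b) ≤ (T*ρ)/(ρ^2 + T^2*b) := hstep1
        _ ≤ c := hstep2
  linarith


/-- The rotationally symmetric barrier over a shrinking annulus,
`w(x,t) = -(1/λ) log cos(λ(√(|x|² + 2(n-1)t) - R)) + λ t + f(t)`
with `f(t) = √(2λ/(πR)) t`. -/
noncomputable def annulusBarrier (n : ℕ) (lam R : ℝ)
    (x : EuclideanSpace ℝ (Fin n)) (t : ℝ) : ℝ :=
  -(1 / lam) * Real.log (Real.cos (lam *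
      (Real.sqrt (‖x‖ ^ 2 + 2 * ((n : ℝ) - 1) * t) - R))) +
    lam * t + Real.sqrt (2 * lam / (Real.pi * R)) * t


/- ### Spatial derivatives -/

lemma hasFDerivAt_barrier_space_aux (n : ℕ) (lam R a t : ℝ) (hlam : lam ≠ 0)
    (y : EuclideanSpace ℝ (Fin n)) (hy : 0 < ‖y‖^2 + a)
    (hcos : Real.cos (lam*(Real.sqrt (‖y‖^2 + a) - R)) ≠ 0) :
    HasFDerivAt (fun z : EuclideanSpace ℝ (Fin n) =>
        -(1/lam) * Real.log (Real.cos (lam*(Real.sqrt (‖z‖^2 + a) - R)))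
          + lam * t + Real.sqrt (2*lam/(Real.pi*R)) * t)
      ((Real.tan (lam*(Real.sqrt (‖y‖^2+a) - R)) / (2*Real.sqrt (‖y‖^2+a)))
          • (2 • (innerSL ℝ y))) y := by
  have hF : HasFDerivAt (fun z : EuclideanSpace ℝ (Fin n) => ‖z‖^2 + a)
      (2 • (innerSL ℝ y)) y :=
    (hasStrictFDerivAt_norm_sq y).hasFDerivAt.add_const a
  have hφ := hasDerivAt_phi_aux lam R hlam (‖y‖^2 + a) hy hcos
  exact ((hφ.comp_hasFDerivAt y hF).add_const (lam*t)).add_const _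

lemma hasFDerivAt_gradcomp_aux (n : ℕ) (lam R a : ℝ) (i : Fin n)
    (y : EuclideanSpace ℝ (Fin n)) (hy : 0 < ‖y‖^2 + a)
    (hcos : Real.cos (lam*(Real.sqrt (‖y‖^2 + a) - R)) ≠ 0) :
    HasFDerivAt (fun z : EuclideanSpace ℝ (Fin n) =>
        Real.tan (lam*(Real.sqrt (‖z‖^2+a) - R)) / Real.sqrt (‖z‖^2+a) * z i)
      ((Real.tan (lam*(Real.sqrt (‖y‖^2+a) - R)) / Real.sqrt (‖y‖^2+a))
          • (EuclideanSpace.proj i : EuclideanSpace ℝ (Fin n) →L[ℝ] ℝ)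
        + (y i) • ((lam*(1+Real.tan (lam*(Real.sqrt (‖y‖^2+a) - R))^2)/(2*(‖y‖^2+a))
            - Real.tan (lam*(Real.sqrt (‖y‖^2+a) - R))/(2*(‖y‖^2+a)*Real.sqrt (‖y‖^2+a)))
          • (2 • (innerSL ℝ y)))) y := by
  have hF : HasFDerivAt (fun z : EuclideanSpace ℝ (Fin n) => ‖z‖^2 + a)
      (2 • (innerSL ℝ y)) y :=
    (hasStrictFDerivAt_norm_sq y).hasFDerivAt.add_const a
  have hP := (hasDerivAt_p_aux lam R (‖y‖^2+a) hy hcos).comp_hasFDerivAt y hF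
  have hproj : HasFDerivAt (fun z : EuclideanSpace ℝ (Fin n) => z i)
      (EuclideanSpace.proj i : EuclideanSpace ℝ (Fin n) →L[ℝ] ℝ) y :=
    (EuclideanSpace.proj i : EuclideanSpace ℝ (Fin n) →L[ℝ] ℝ).hasFDerivAt
  exact hP.mul hproj


set_option maxHeartbeats 4000000 in
/-- On its annular domain (with `x ≠ 0`, `t ∈ [0, R²/(2(n-1))]`) the barrier
satisfies the supersolution inequality
`-∂ₜ w + (δ^{ij} - wⁱ wʲ/(1 + |∇w|²)) w_{ij} ≤ 0`. -/
theorem annulusBarrier_supersolution (n : ℕ) (hn : 2 ≤ n) (lam R : ℝ)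
    (hlam : 0 < lam) (hR : 0 < R)
    (t : ℝ) (ht : t ∈ Set.Icc 0 (R ^ 2 / (2 * ((n : ℝ) - 1))))
    (x : EuclideanSpace ℝ (Fin n)) (hx : x ≠ 0)
    (h1 : R - Real.pi / (2 * lam) < Real.sqrt (‖x‖ ^ 2 + 2 * ((n : ℝ) - 1) * t))
    (h2 : Real.sqrt (‖x‖ ^ 2 + 2 * ((n : ℝ) - 1) * t) < R + Real.pi / (2 * lam)) :
    -(deriv (fun s => annulusBarrier n lam R x s) t) +
      ∑ i : Fin n, ∑ j : Fin n,
        ((if i = j then (1 : ℝ) else 0) -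
            fderiv ℝ (fun y => annulusBarrier n lam R y t) x (EuclideanSpace.single i 1) *
              fderiv ℝ (fun y => annulusBarrier n lam R y t) x (EuclideanSpace.single j 1) /
              (1 + ∑ k : Fin n,
                (fderiv ℝ (fun y => annulusBarrier n lam R y t) x
                  (EuclideanSpace.single k 1)) ^ 2)) *
          fderiv ℝ (fun y =>
              fderiv ℝ (fun z => annulusBarrier n lam R z t) y (EuclideanSpace.single i 1))
            x (EuclideanSpace.single j 1) ≤ 0 := by
  have hπ := Real.pi_pos
  have hn1 : (1:ℝ) ≤ (n:ℝ) - 1 := by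
    have : (2:ℝ) ≤ (n:ℝ) := by exact_mod_cast hn
    linarith
  obtain ⟨ht0, ht1⟩ := ht
  have ha0 : (0:ℝ) ≤ 2 * ((n:ℝ) - 1) * t := by nlinarith
  have hb0 : 0 < ‖x‖^2 := by
    have : 0 < ‖x‖ := norm_pos_iff.mpr hx
    positivity
  have hs0 : 0 < ‖x‖^2 + 2 * ((n:ℝ) - 1) * t := by linarith
  set ρ : ℝ := Real.sqrt (‖x‖^2 + 2 * ((n:ℝ) - 1) * t) with hρdef
  have hρ : 0 < ρ := Real.sqrt_pos.mpr hs0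
  have hρ2 : ρ^2 = ‖x‖^2 + 2 * ((n:ℝ) - 1) * t := Real.sq_sqrt hs0.le
  have hπlam : lam * (π / (2*lam)) = π/2 := by field_simp
  have hθ1 : -(π/2) < lam*(ρ - R) := by
    have h1' : -(π/(2*lam)) < ρ - R := by linarith
    have := mul_lt_mul_of_pos_left h1' hlam
    rw [mul_neg, hπlam] at this
    linarith
  have hθ2 : lam*(ρ - R) < π/2 := by
    have h2' : ρ - R < π/(2*lam) := by linarith
    have := mul_lt_mul_of_pos_left h2' hlam
    rw [hπlam] at this
    linarith
  have hcosθ : 0 < Real.cos (lam*(ρ - R)) := Real.cos_pos_of_mem_Ioo ⟨hθ1, hθ2⟩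
  have hcosne : Real.cos (lam*(ρ - R)) ≠ 0 := hcosθ.ne'
  -- notation
  set T : ℝ := Real.tan (lam*(ρ - R)) with hT
  set c : ℝ := Real.sqrt (2*lam/(π*R)) with hc
  set P : ℝ := T/ρ with hP
  set Qd : ℝ := lam*(1+T^2)/ρ^2 - T/ρ^3 with hQd
  -- time derivative
  have hderiv_t : deriv (fun s => annulusBarrier n lam R x s) t
      = T/(2*ρ) * (2*((n:ℝ)-1)) + (lam + c) := by
    have hinner : HasDerivAt (fun s : ℝ => ‖x‖^2 + 2*((n:ℝ)-1)*s) (2*((n:ℝ)-1)) t := by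
      simpa using ((hasDerivAt_id t).const_mul (2*((n:ℝ)-1))).const_add (‖x‖^2)
    have hφ := hasDerivAt_phi_aux lam R hlam.ne' (‖x‖^2 + 2*((n:ℝ)-1)*t) hs0 (by
      rw [← hρdef]; exact hcosne)
    have hcomp := hφ.comp t hinner
    have hlin : HasDerivAt (fun s : ℝ => lam * s + c * s) (lam + c) t := by
      have h := ((hasDerivAt_id' t).const_mul lam).add ((hasDerivAt_id' t).const_mul c)
      simp only [mul_one] at h; exact h
    have htot := hcomp.add hlin
    have htot' : HasDerivAt (fun s => annulusBarrier n lam R x s)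
        (Real.tan (lam*(Real.sqrt (‖x‖^2 + 2*((n:ℝ)-1)*t) - R))
            /(2*Real.sqrt (‖x‖^2 + 2*((n:ℝ)-1)*t)) * (2*((n:ℝ)-1)) + (lam + c)) t := by
      apply htot.congr_of_eventuallyEq
      filter_upwards with s
      simp only [annulusBarrier, Function.comp_apply, Pi.add_apply]
      rw [hc]
      ring
    rw [htot'.deriv, ← hρdef]
  -- spatial first derivatives
  have hgrad : ∀ i : Fin n,
      fderiv ℝ (fun y => annulusBarrier n lam R y t) x (EuclideanSpace.single i 1)
        = P * x i := by
    intro i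
    have hsp := hasFDerivAt_barrier_space_aux n lam R (2*((n:ℝ)-1)*t) t hlam.ne' x hs0
      (by rw [← hρdef]; exact hcosne)
    have hfun : (fun z : EuclideanSpace ℝ (Fin n) =>
        -(1/lam) * Real.log (Real.cos (lam*(Real.sqrt (‖z‖^2 + 2*((n:ℝ)-1)*t) - R)))
          + lam * t + Real.sqrt (2*lam/(Real.pi*R)) * t)
        = fun y => annulusBarrier n lam R y t := by
      funext z
      simp only [annulusBarrier]
    rw [← hfun, hsp.fderiv]
    simp only [ContinuousLinearMap.smul_apply, ContinuousLinearMap.smul_apply,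
      innerSL_apply_apply]
    rw [← hρdef]
    have : (inner ℝ x (EuclideanSpace.single i 1) : ℝ) = x i := by
      rw [EuclideanSpace.inner_single_right]
      simp
    rw [this]
    rw [hP, hT]
    field_simp
    linear_combination (x i * Real.tan (lam * (ρ - R))) * mul_inv_cancel₀ hρ.ne'
  -- the neighborhood where the gradient formula holds
  have hcos' : Real.cos (lam*(Real.sqrt (‖x‖^2 + 2*((n:ℝ)-1)*t) - R)) ≠ 0 := by
    rw [← hρdef]; exact hcosne
  have hUopen : IsOpen {y : EuclideanSpace ℝ (Fin n) |
      0 < ‖y‖^2 + 2*((n:ℝ)-1)*t ∧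
      Real.cos (lam*(Real.sqrt (‖y‖^2 + 2*((n:ℝ)-1)*t) - R)) ≠ 0} := by
    have hcont : Continuous (fun y : EuclideanSpace ℝ (Fin n) => ‖y‖^2 + 2*((n:ℝ)-1)*t) := by
      fun_prop
    have hcont2 : Continuous (fun y : EuclideanSpace ℝ (Fin n) =>
        Real.cos (lam*(Real.sqrt (‖y‖^2 + 2*((n:ℝ)-1)*t) - R))) := by
      fun_prop
    exact (isOpen_lt continuous_const hcont).inter
      (hcont2.isOpen_preimage {(0:ℝ)}ᶜ isOpen_compl_singleton)
  have hxU : x ∈ {y : EuclideanSpace ℝ (Fin n) |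
      0 < ‖y‖^2 + 2*((n:ℝ)-1)*t ∧
      Real.cos (lam*(Real.sqrt (‖y‖^2 + 2*((n:ℝ)-1)*t) - R)) ≠ 0} := ⟨hs0, hcos'⟩
  -- second derivatives
  have hsecond : ∀ i j : Fin n,
      fderiv ℝ (fun y =>
          fderiv ℝ (fun z => annulusBarrier n lam R z t) y (EuclideanSpace.single i 1))
        x (EuclideanSpace.single j 1)
      = Qd * x i * x j + (if i = j then P else 0) := by
    intro i j
    have hev : (fun y => fderiv ℝ (fun z => annulusBarrier n lam R z t) y
          (EuclideanSpace.single i 1)) =ᶠ[nhds x]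
        (fun y : EuclideanSpace ℝ (Fin n) =>
          Real.tan (lam*(Real.sqrt (‖y‖^2 + 2*((n:ℝ)-1)*t) - R))
            / Real.sqrt (‖y‖^2 + 2*((n:ℝ)-1)*t) * y i) := by
      filter_upwards [hUopen.mem_nhds hxU] with y hy
      obtain ⟨hy1, hy2⟩ := hy
      have hsp := hasFDerivAt_barrier_space_aux n lam R (2*((n:ℝ)-1)*t) t hlam.ne' y hy1 hy2
      have hfun : (fun z : EuclideanSpace ℝ (Fin n) =>
          -(1/lam) * Real.log (Real.cos (lam*(Real.sqrt (‖z‖^2 + 2*((n:ℝ)-1)*t) - R)))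
            + lam * t + Real.sqrt (2*lam/(Real.pi*R)) * t)
          = fun z => annulusBarrier n lam R z t := by
        funext z
        simp only [annulusBarrier]
      rw [← hfun, hsp.fderiv]
      have hsy : Real.sqrt (‖y‖^2 + 2*((n:ℝ)-1)*t) ≠ 0 := (Real.sqrt_pos.mpr hy1).ne'
      simp only [ContinuousLinearMap.smul_apply, innerSL_apply_apply, smul_eq_mul]
      have hyi : (inner ℝ y (EuclideanSpace.single i 1) : ℝ) = y i := by
        rw [EuclideanSpace.inner_single_right]; simp
      rw [hyi]
      field_simp
      ring
    rw [Filter.EventuallyEq.fderiv_eq hev]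
    have hgc := hasFDerivAt_gradcomp_aux n lam R (2*((n:ℝ)-1)*t) i x hs0 hcos'
    rw [hgc.fderiv]
    have hxi : (inner ℝ x (EuclideanSpace.single j 1) : ℝ) = x j := by
      rw [EuclideanSpace.inner_single_right]; simp
    simp only [ContinuousLinearMap.add_apply, ContinuousLinearMap.smul_apply,
      innerSL_apply_apply, smul_eq_mul, hxi]
    have hproj : (EuclideanSpace.proj i : EuclideanSpace ℝ (Fin n) →L[ℝ] ℝ)
        (EuclideanSpace.single j 1) = if i = j then (1:ℝ) else 0 := by
      simp [EuclideanSpace.single_apply]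
    rw [hproj]
    rw [← hρdef, hP, hQd, ← hρ2]
    by_cases h : i = j
    · simp only [if_pos h]
      field_simp
      ring
    · simp only [if_neg h]
      field_simp
      ring
  -- sums
  have hbsum : ‖x‖^2 = ∑ k : Fin n, (x k)^2 := by
    rw [EuclideanSpace.norm_eq, Real.sq_sqrt (by positivity)]
    simp [sq_abs]
  simp only [hderiv_t, hgrad, hsecond]
  have hQsum : (1 + ∑ k : Fin n, (P * x k)^2) = 1 + P^2 * ‖x‖^2 := by
    rw [hbsum, Finset.mul_sum]
    congr 1
    apply Finset.sum_congr rfl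
    intros k _
    ring
  rw [hQsum]
  have hQpos : 0 < 1 + P^2 * ‖x‖^2 := by positivity
  set Q : ℝ := 1 + P^2 * ‖x‖^2 with hQ
  have hterm : ∀ i j : Fin n,
      ((if i=j then (1:ℝ) else 0) - P * x i * (P * x j) / Q)
          * (Qd * x i * x j + if i=j then P else 0)
      = ((-(P^2*Qd/Q)) * (x i)^2) * (x j)^2
        + (if i=j then (Qd*(x i)^2 + P - P^2*(x i)^2/Q*P) else 0) := by
    intro i j
    by_cases h : i = j
    · subst h
      simp only [if_pos rfl, ↓reduceIte]
      field_simp [hQpos.ne']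
      ring
    · simp only [if_neg h]
      field_simp
      first
      | exact Or.inl (by ring)
      | exact Or.inr (by ring)
      | ring
  have hrow : ∀ i : Fin n,
      ∑ j : Fin n, (((-(P^2*Qd/Q)) * (x i)^2) * (x j)^2
          + (if i=j then (Qd*(x i)^2 + P - P^2*(x i)^2/Q*P) else 0))
      = ((-(P^2*Qd/Q))*‖x‖^2 + Qd - P^2/Q*P) * (x i)^2 + P := by
    intro i
    rw [Finset.sum_add_distrib, ← Finset.mul_sum, ← hbsum, Finset.sum_ite_eq]
    simp only [Finset.mem_univ, if_pos]
    ring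
  have hdouble : ∑ i : Fin n, ∑ j : Fin n,
      (((if i=j then (1:ℝ) else 0) - P * x i * (P * x j) / Q)
        * (Qd * x i * x j + if i=j then P else 0))
      = ((-(P^2*Qd/Q))*‖x‖^2 + Qd - P^2/Q*P) * ‖x‖^2 + (n:ℝ)*P := by
    calc ∑ i : Fin n, ∑ j : Fin n,
        (((if i=j then (1:ℝ) else 0) - P * x i * (P * x j) / Q)
          * (Qd * x i * x j + if i=j then P else 0))
        = ∑ i : Fin n, (((-(P^2*Qd/Q))*‖x‖^2 + Qd - P^2/Q*P) * (x i)^2 + P) := by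
          apply Finset.sum_congr rfl
          intro i _
          rw [Finset.sum_congr rfl fun j _ => hterm i j]
          exact hrow i
      _ = ((-(P^2*Qd/Q))*‖x‖^2 + Qd - P^2/Q*P) * (∑ i : Fin n, (x i)^2) + (n:ℝ)*P := by
          rw [Finset.sum_add_distrib, ← Finset.mul_sum, Finset.sum_const,
            Finset.card_univ, Fintype.card_fin, nsmul_eq_mul]
      _ = ((-(P^2*Qd/Q))*‖x‖^2 + Qd - P^2/Q*P) * ‖x‖^2 + (n:ℝ)*P := by rw [← hbsum]
  rw [hdouble]
  -- bridge to the key inequality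
  have hρne : ρ ≠ 0 := hρ.ne'
  have hQne : Q ≠ 0 := hQpos.ne'
  have hbridge : -(T/(2*ρ)*(2*((n:ℝ)-1)) + (lam + c))
      + (((-(P^2*Qd/Q))*‖x‖^2 + Qd - P^2/Q*P) * ‖x‖^2 + (n:ℝ)*P)
      = -lam - c + T/ρ
        + (lam*(1+T^2)/ρ^2 - T/ρ^3)*‖x‖^2
        - ((T/ρ)^2*(lam*(1+T^2)/ρ^2 - T/ρ^3)*(‖x‖^2)^2 + (T/ρ)^3*(‖x‖^2))
          /(1 + (T/ρ)^2*(‖x‖^2)) := by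
    rw [hQ, hP, hQd]
    field_simp
    ring
  rw [hbridge, hT, hc]
  have hbρ : ‖x‖^2 ≤ ρ^2 := by linarith [hρ2]
  have hbR : ρ^2 - ‖x‖^2 ≤ R^2 := by
    have ht1' : t * (2*((n:ℝ)-1)) ≤ R^2 := by
      rw [← le_div_iff₀ (by positivity)]
      exact ht1
    nlinarith [hρ2]
  exact key_ineq_aux lam R ρ (‖x‖^2) (lam*(ρ-R)) hlam hR hρ hb0 hbρ hbR rfl hθ1 hθ2
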